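/- Structure of the optimal contract with retirement: there exists a unique optimal contract with retirement (s,p), and it satisfies: (i) 0 = s_0 < s_1 < ⋯ < s_{K−1} < s_K = 1 (gradual and eventually full knowledge transfer); (ii) s_1 is maximal, i.e. for every nondecreasing sequence s′ : {0,…,K} → [0,1] with s′_0 = 0 satisfying (R-BE), one has s′_1 ≤ s_1; (iii) p_0 = 0; (iv) p_t = (1−δ^{K−t})·(w(s_{t−1}) − w(s_t))/(1−δ) for every t ∈ {1,…,K−1}. -/

import Mathlib

open Set Filter

/-- Principal's continuation value in the retirement model:
`Π^R_t(s,p) = Σ_{τ=t}^{K−1} δ^{τ−t}(π(s_τ) − p_τ) − δ^{K−1−t}·C(s_K)`. -/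
noncomputable def PiR (δ : ℝ) (π C : ℝ → ℝ) (K : ℕ) (s p : ℕ → ℝ) (t : ℕ) : ℝ :=
  (∑ τ ∈ Finset.Ico t K, δ ^ (τ - t) * (π (s τ) - p τ)) - δ ^ (K - 1 - t) * C (s K)

/-- Expert's continuation value in the retirement model:
`W^R_t(s,p) = Σ_{τ=t}^{K−1} δ^{τ−t}(w(s_τ) + p_τ)`. -/
noncomputable def WR (δ : ℝ) (w : ℝ → ℝ) (K : ℕ) (s p : ℕ → ℝ) (t : ℕ) : ℝ :=
  ∑ τ ∈ Finset.Ico t K, δ ^ (τ - t) * (w (s τ) + p τ)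

/-- Implementability in the retirement model: feasibility plus (R-P-IC) and (R-E-IC). -/
def ImplementableR (δ : ℝ) (π w C : ℝ → ℝ) (K : ℕ) (s p : ℕ → ℝ) : Prop :=
  (∀ t ≤ K, s t ∈ Set.Icc (0 : ℝ) 1) ∧ s 0 = 0 ∧
  (∀ t < K, s t ≤ s (t + 1)) ∧ (∀ t < K, 0 ≤ p t) ∧
  (∀ t < K,
    (1 - δ ^ (K - t)) * π (s t) / (1 - δ) - δ ^ (K - 1 - t) * C (s t)
      ≤ PiR δ π C K s p t) ∧
  (∀ t : ℕ, t + 1 < K →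
    (1 - δ ^ (K - t - 1)) * w (s t) / (1 - δ) ≤ WR δ w K s p (t + 1))

/-- Optimality in the retirement model. -/
def OptimalR (δ : ℝ) (π w C : ℝ → ℝ) (K : ℕ) (s p : ℕ → ℝ) : Prop :=
  ImplementableR δ π w C K s p ∧
  ∀ s' p' : ℕ → ℝ, ImplementableR δ π w C K s' p' →
    PiR δ π C K s' p' 0 ≤ PiR δ π C K s p 0

/-- The retirement break-even condition (R-BE), for every `t ∈ {1,…,K−1}`. -/
def RBE (δ : ℝ) (π w C : ℝ → ℝ) (K : ℕ) (s : ℕ → ℝ) : Prop :=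
  ∀ t : ℕ, 1 ≤ t → t ≤ K - 1 →
    (δ - δ ^ (K - t)) * (π (s (t + 1)) - π (s t)) / (1 - δ)
        + δ ^ (K - 1 - t) * (C (s t) - C (s (t + 1)))
      = (1 - δ ^ (K - t)) * (w (s (t - 1)) - w (s t)) / (1 - δ)

open Topology

namespace Retire
variable (δ : ℝ) (π w C : ℝ → ℝ) (K : ℕ)
noncomputable def B (t : ℕ) : ℝ := ∑ i ∈ Finset.range (K - t), δ ^ i
noncomputable def q (s : ℕ → ℝ) (t : ℕ) : ℝ :=
  if t = 0 then 0 else B δ K t * (w (s (t - 1)) - w (s t))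
noncomputable def Phi (s : ℕ → ℝ) (t : ℕ) : ℝ :=
  (∑ τ ∈ Finset.Ico t K, δ ^ (τ - t) * (π (s τ) + w (s τ)))
    - B δ K t * w (s (t - 1)) - δ ^ (K - 1 - t) * C (s K)
noncomputable def D (s : ℕ → ℝ) (t : ℕ) : ℝ :=
  Phi δ π w C K s t - (B δ K t * π (s t) - δ ^ (K - 1 - t) * C (s t))
noncomputable def e (s : ℕ → ℝ) (t : ℕ) : ℝ :=
  δ * B δ K (t + 1) * (π (s (t + 1)) - π (s t))
    + δ ^ (K - 1 - t) * (C (s t) - C (s (t + 1)))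
    - B δ K t * (w (s (t - 1)) - w (s t))
def FeasS (s : ℕ → ℝ) : Prop :=
  s 0 = 0 ∧ (∀ t ≤ K, s t ∈ Set.Icc (0 : ℝ) 1) ∧ (∀ t < K, s t ≤ s (t + 1)) ∧
    ∀ t, 1 ≤ t → t ≤ K - 1 → 0 ≤ D δ π w C K s t
noncomputable def J (s : ℕ → ℝ) : ℝ := PiR δ π C K s (q δ w K s) 0
section Basic
variable {δ : ℝ} {K : ℕ}
lemma geom_div (h1 : δ ≠ 1) (n : ℕ) :
    (1 - δ ^ n) / (1 - δ) = ∑ i ∈ Finset.range n, δ ^ i := by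
  rw [geom_sum_eq h1]
  have h : (1 : ℝ) - δ ≠ 0 := by intro h; apply h1; linarith
  have h' : δ - 1 ≠ 0 := by intro h'; apply h1; linarith
  field_simp; ring
lemma Bval (h1 : δ ≠ 1) (t : ℕ) : (1 - δ ^ (K - t)) / (1 - δ) = B δ K t := geom_div h1 _
lemma B_nonneg (h0 : 0 ≤ δ) (t : ℕ) : 0 ≤ B δ K t :=
  Finset.sum_nonneg fun i _ => pow_nonneg h0 i
lemma B_pos (h0 : 0 < δ) {t : ℕ} (h : t < K) : 0 < B δ K t :=
  Finset.sum_pos (fun i _ => pow_pos h0 i) (by simp [Finset.nonempty_range_iff]; omega)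
lemma B_K : B δ K K = 0 := by simp [B]
lemma B_K1 (h : 1 ≤ K) : B δ K (K - 1) = 1 := by
  unfold B; rw [show K - (K - 1) = 1 by omega]; simp
lemma B_rec {t : ℕ} (h : t < K) : B δ K t = 1 + δ * B δ K (t + 1) := by
  unfold B; rw [show K - t = (K - (t + 1)) + 1 by omega, geom_sum_succ]; ring
lemma sum_peel (f : ℕ → ℝ) {t : ℕ} (h : t < K) :
    ∑ τ ∈ Finset.Ico t K, δ ^ (τ - t) * f τ
      = f t + δ * ∑ τ ∈ Finset.Ico (t + 1) K, δ ^ (τ - (t + 1)) * f τ := by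
  rw [Finset.sum_eq_sum_Ico_succ_bot h]
  simp only [Nat.sub_self, pow_zero, one_mul]
  rw [Finset.mul_sum]
  congr 1
  refine Finset.sum_congr rfl fun τ hτ => ?_
  have hτ' : t + 1 ≤ τ := (Finset.mem_Ico.1 hτ).1
  rw [show τ - t = (τ - (t + 1)) + 1 by omega, pow_succ]
  ring
lemma sum_empty_K (f : ℕ → ℝ) : ∑ τ ∈ Finset.Ico K K, δ ^ (τ - K) * f τ = 0 := by simp
end Basic

section Identities
variable {δ : ℝ} {π w C : ℝ → ℝ} {K : ℕ}

lemma WR_peel (s p : ℕ → ℝ) {t : ℕ} (h : t < K) :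
    WR δ w K s p t = (w (s t) + p t) + δ * WR δ w K s p (t + 1) := by
  unfold WR; exact sum_peel _ h

lemma PiR_peel (s p : ℕ → ℝ) {t : ℕ} (h : t + 1 ≤ K - 1) :
    PiR δ π C K s p t = (π (s t) - p t) + δ * PiR δ π C K s p (t + 1) := by
  unfold PiR
  rw [sum_peel (fun τ => π (s τ) - p τ) (by omega : t < K),
    show K - 1 - t = (K - 1 - (t + 1)) + 1 by omega, pow_succ]
  ring

lemma Phi_peel (s : ℕ → ℝ) {t : ℕ} (h : t + 1 ≤ K - 1) :
    Phi δ π w C K s t = (π (s t) + w (s t)) + δ * Phi δ π w C K s (t + 1)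
      + δ * B δ K (t + 1) * w (s t) - B δ K t * w (s (t - 1)) := by
  unfold Phi
  rw [sum_peel (fun τ => π (s τ) + w (s τ)) (by omega : t < K),
    show K - 1 - t = (K - 1 - (t + 1)) + 1 by omega, pow_succ,
    show t + 1 - 1 = t by omega]
  ring

lemma WQ (hK : 2 ≤ K) (s : ℕ → ℝ) :
    ∀ t, 1 ≤ t → t ≤ K - 1 → WR δ w K s (q δ w K s) t = B δ K t * w (s (t - 1)) := by
  suffices h : ∀ m t, t + m = K - 1 → 1 ≤ t → WR δ w K s (q δ w K s) t = B δ K t * w (s (t - 1)) by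
    intro t h1 h2; exact h (K - 1 - t) t (by omega) h1
  intro m
  induction m with
  | zero =>
    intro t ht h1
    have htK : t = K - 1 := by omega
    subst htK
    rw [WR_peel s _ (by omega : K - 1 < K), show K - 1 + 1 = K by omega]
    unfold WR
    rw [sum_empty_K, q, if_neg (by omega), B_K1 (by omega)]
    ring
  | succ m ih =>
    intro t ht h1
    rw [WR_peel s _ (by omega : t < K), ih (t + 1) (by omega) (by omega), q,
      if_neg (by omega), show t + 1 - 1 = t by omega, B_rec (by omega : t < K)]
    ring

lemma PiQ (hK : 2 ≤ K) (s : ℕ → ℝ) :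
    ∀ t, 1 ≤ t → t ≤ K - 1 → PiR δ π C K s (q δ w K s) t = Phi δ π w C K s t := by
  suffices h : ∀ m t, t + m = K - 1 → 1 ≤ t → PiR δ π C K s (q δ w K s) t = Phi δ π w C K s t by
    intro t h1 h2; exact h (K - 1 - t) t (by omega) h1
  intro m
  induction m with
  | zero =>
    intro t ht h1
    have htK : t = K - 1 := by omega
    subst htK
    unfold PiR Phi
    rw [sum_peel (fun τ => π (s τ) - q δ w K s τ) (by omega : K - 1 < K),
      sum_peel (fun τ => π (s τ) + w (s τ)) (by omega : K - 1 < K),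
      show K - 1 + 1 = K by omega, sum_empty_K, sum_empty_K, q,
      if_neg (by omega), B_K1 (by omega)]
    ring
  | succ m ih =>
    intro t ht h1
    rw [PiR_peel s _ (by omega : t + 1 ≤ K - 1), ih (t + 1) (by omega) (by omega),
      Phi_peel s (by omega : t + 1 ≤ K - 1), q, if_neg (by omega),
      B_rec (by omega : t < K)]
    ring

lemma J_eq (hK : 2 ≤ K) (s : ℕ → ℝ) (h0 : s 0 = 0) :
    J δ π w C K s = π 0 + δ * Phi δ π w C K s 1 := by
  unfold J
  rw [PiR_peel s _ (by omega : 0 + 1 ≤ K - 1), PiQ hK s 1 le_rfl (by omega), q, if_pos rfl, h0]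
  ring

lemma D_rec (hK : 2 ≤ K) (s : ℕ → ℝ) {t : ℕ} (h1 : 1 ≤ t) (h2 : t ≤ K - 2) :
    D δ π w C K s t = e δ π w C K s t + δ * D δ π w C K s (t + 1) := by
  unfold D e
  rw [Phi_peel s (by omega : t + 1 ≤ K - 1),
    show K - 1 - t = (K - 1 - (t + 1)) + 1 by omega, pow_succ,
    B_rec (by omega : t < K)]
  ring

lemma D_K1 (hK : 2 ≤ K) (s : ℕ → ℝ) :
    D δ π w C K s (K - 1) = e δ π w C K s (K - 1) := by
  unfold D e Phi
  rw [sum_peel (fun τ => π (s τ) + w (s τ)) (by omega : K - 1 < K),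
    show K - 1 + 1 = K by omega, sum_empty_K, B_K, B_K1 (by omega : 1 ≤ K),
    Nat.sub_self]
  ring

lemma rbe_iff (hδ : δ ∈ Set.Ioo (0 : ℝ) 1) (hK : 2 ≤ K) (s : ℕ → ℝ) :
    RBE δ π w C K s ↔ ∀ t, 1 ≤ t → t ≤ K - 1 → e δ π w C K s t = 0 := by
  have h1 : δ ≠ 1 := ne_of_lt hδ.2
  have key : ∀ t, 1 ≤ t → t ≤ K - 1 →
      (((δ - δ ^ (K - t)) * (π (s (t + 1)) - π (s t)) / (1 - δ)
        + δ ^ (K - 1 - t) * (C (s t) - C (s (t + 1)))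
      = (1 - δ ^ (K - t)) * (w (s (t - 1)) - w (s t)) / (1 - δ)) ↔
      e δ π w C K s t = 0) := by
    intro t ht1 ht2
    have c1 : (δ - δ ^ (K - t)) / (1 - δ) = δ * B δ K (t + 1) := by
      rw [show K - t = (K - (t + 1)) + 1 by omega, pow_succ']
      rw [show δ - δ * δ ^ (K - (t + 1)) = δ * (1 - δ ^ (K - (t + 1))) by ring,
        mul_div_assoc, Bval h1]
    have c2 : (1 - δ ^ (K - t)) / (1 - δ) = B δ K t := Bval h1 t
    rw [mul_div_right_comm, c1, mul_div_right_comm, c2]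
    unfold e
    constructor
    · intro h; linarith
    · intro h; linarith
  constructor
  · intro h t ht1 ht2; exact (key t ht1 ht2).1 (h t ht1 ht2)
  · intro h t ht1 ht2; exact (key t ht1 ht2).2 (h t ht1 ht2)


end Identities

section Ineq
variable {δ : ℝ} {π w C : ℝ → ℝ} {K : ℕ}

lemma PiWR (s p : ℕ → ℝ) (t : ℕ) :
    PiR δ π C K s p t + WR δ w K s p t
      = (∑ τ ∈ Finset.Ico t K, δ ^ (τ - t) * (π (s τ) + w (s τ)))
        - δ ^ (K - 1 - t) * C (s K) := by
  unfold PiR WR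
  rw [sub_add_eq_add_sub]
  congr 1
  rw [← Finset.sum_add_distrib]
  exact Finset.sum_congr rfl fun τ _ => by ring

lemma mono_le {f : ℝ → ℝ} (hf : StrictMonoOn f (Set.Icc (0:ℝ) 1)) {x y : ℝ}
    (hx : x ∈ Set.Icc (0:ℝ) 1) (hy : y ∈ Set.Icc (0:ℝ) 1) (h : x ≤ y) : f x ≤ f y := by
  rcases eq_or_lt_of_le h with h' | h'
  · rw [h']
  · exact le_of_lt (hf hx hy h')

lemma anti_le {f : ℝ → ℝ} (hf : StrictAntiOn f (Set.Icc (0:ℝ) 1)) {x y : ℝ}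
    (hx : x ∈ Set.Icc (0:ℝ) 1) (hy : y ∈ Set.Icc (0:ℝ) 1) (h : x ≤ y) : f y ≤ f x := by
  rcases eq_or_lt_of_le h with h' | h'
  · rw [h']
  · exact le_of_lt (hf hx hy h')

lemma seq_mono (s : ℕ → ℝ) (hm : ∀ t < K, s t ≤ s (t + 1)) :
    ∀ a b, a ≤ b → b ≤ K → s a ≤ s b := by
  intro a b hab hbK
  induction b with
  | zero =>
    have : a = 0 := by omega
    rw [this]
  | succ n ih =>
    rcases Nat.lt_or_ge a (n + 1) with h | h
    · exact le_trans (ih (by omega) (by omega)) (hm n (by omega))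
    · have : a = n + 1 := by omega
      rw [this]

lemma q_nonneg (hδ : 0 ≤ δ) (hwa : StrictAntiOn w (Set.Icc (0:ℝ) 1)) (s : ℕ → ℝ)
    (hb : ∀ t ≤ K, s t ∈ Set.Icc (0:ℝ) 1) (hm : ∀ t < K, s t ≤ s (t + 1))
    {t : ℕ} (ht : t < K) : 0 ≤ q δ w K s t := by
  unfold q
  by_cases h0 : t = 0
  · simp [h0]
  · rw [if_neg h0]
    have h1 : s (t - 1) ≤ s t := by
      have := hm (t - 1) (by omega)
      rwa [show t - 1 + 1 = t by omega] at this
    have := anti_le hwa (hb (t - 1) (by omega)) (hb t (by omega)) h1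
    exact mul_nonneg (B_nonneg hδ t) (by linarith)

lemma Phi_eq_D (s : ℕ → ℝ) (t : ℕ) :
    Phi δ π w C K s t = D δ π w C K s t + (B δ K t * π (s t) - δ ^ (K - 1 - t) * C (s t)) := by
  unfold D; ring

lemma canon_impl (hδ : δ ∈ Set.Ioo (0:ℝ) 1) (hK : 2 ≤ K)
    (hπm : StrictMonoOn π (Set.Icc 0 1)) (hwa : StrictAntiOn w (Set.Icc 0 1))
    (hCa : StrictAntiOn C (Set.Icc 0 1))
    (s : ℕ → ℝ) (hf : FeasS δ π w C K s) :
    ImplementableR δ π w C K s (q δ w K s) := by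
  obtain ⟨h0, hb, hm, hD⟩ := hf
  have h1 : δ ≠ 1 := ne_of_lt hδ.2
  refine ⟨hb, h0, hm, fun t ht => q_nonneg (le_of_lt hδ.1) hwa s hb hm ht, ?_, ?_⟩
  · -- P-IC
    intro t ht
    by_cases ht0 : t = 0
    · subst ht0
      rw [PiR_peel s _ (by omega : 0 + 1 ≤ K - 1), PiQ hK s 1 le_rfl (by omega),
        Phi_eq_D, q, if_pos rfl, mul_div_right_comm, Bval h1]
      have hD1 : 0 ≤ D δ π w C K s 1 := hD 1 le_rfl (by omega)
      have hs01 : s 0 ≤ s 1 := hm 0 (by omega)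
      have hπ01 : π (s 0) ≤ π (s 1) := mono_le hπm (hb 0 (by omega)) (hb 1 (by omega)) hs01
      have hC01 : C (s 1) ≤ C (s 0) := anti_le hCa (hb 0 (by omega)) (hb 1 (by omega)) hs01
      have hB1 : 0 ≤ B δ K 1 := B_nonneg (le_of_lt hδ.1) 1
      have hpow : (0:ℝ) ≤ δ ^ (K - 1 - 1) := pow_nonneg (le_of_lt hδ.1) _
      have e1 : 0 ≤ δ * D δ π w C K s 1 := mul_nonneg (le_of_lt hδ.1) hD1
      have e2 : 0 ≤ δ * B δ K 1 * (π (s 1) - π (s 0)) :=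
        mul_nonneg (mul_nonneg (le_of_lt hδ.1) hB1) (by linarith)
      have e3 : 0 ≤ δ * δ ^ (K - 1 - 1) * (C (s 0) - C (s 1)) :=
        mul_nonneg (mul_nonneg (le_of_lt hδ.1) hpow) (by linarith)
      have hb0 : B δ K 0 = 1 + δ * B δ K 1 := B_rec (by omega : 0 < K)
      have hpow1 : δ ^ (K - 1 - 0) = δ * δ ^ (K - 1 - 1) := by
        rw [show K - 1 - 0 = (K - 1 - 1) + 1 by omega, pow_succ]; ring
      rw [hb0, hpow1]
      nlinarith [e1, e2, e3]
    · have ht1 : 1 ≤ t := by omega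
      have ht2 : t ≤ K - 1 := by omega
      rw [PiQ hK s t ht1 ht2, Phi_eq_D, mul_div_right_comm, Bval h1]
      have := hD t ht1 ht2
      linarith
  · -- E-IC
    intro t ht
    rw [WQ hK s (t + 1) (by omega) (by omega), show t + 1 - 1 = t from rfl,
      mul_div_right_comm, show K - t - 1 = K - (t + 1) by omega, Bval h1]

lemma lemA (hδ : δ ∈ Set.Ioo (0:ℝ) 1) (hK : 2 ≤ K) (s p : ℕ → ℝ)
    (himp : ImplementableR δ π w C K s p) :
    (∀ t, 1 ≤ t → t ≤ K - 1 → PiR δ π C K s p t ≤ PiR δ π C K s (q δ w K s) t) ∧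
      PiR δ π C K s p 0 ≤ PiR δ π C K s (q δ w K s) 0 := by
  obtain ⟨hb, h0, hm, hp, hPIC, hEIC⟩ := himp
  have h1 : δ ≠ 1 := ne_of_lt hδ.2
  have key : ∀ t, 1 ≤ t → t ≤ K - 1 → B δ K t * w (s (t - 1)) ≤ WR δ w K s p t := by
    intro t ht1 ht2
    have := hEIC (t - 1) (by omega)
    rw [show t - 1 + 1 = t by omega, mul_div_right_comm,
      show K - (t - 1) - 1 = K - t by omega, Bval h1] at this
    exact this
  have main : ∀ t, 1 ≤ t → t ≤ K - 1 → PiR δ π C K s p t ≤ PiR δ π C K s (q δ w K s) t := by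
    intro t ht1 ht2
    have e1 := PiWR (δ := δ) (π := π) (w := w) (C := C) (K := K) s p t
    have e2 := PiWR (δ := δ) (π := π) (w := w) (C := C) (K := K) s (q δ w K s) t
    have e3 := WQ (δ := δ) (w := w) hK s t ht1 ht2
    have e4 := key t ht1 ht2
    linarith
  refine ⟨main, ?_⟩
  have e1 := PiWR (δ := δ) (π := π) (w := w) (C := C) (K := K) s p 0
  have e2 := PiWR (δ := δ) (π := π) (w := w) (C := C) (K := K) s (q δ w K s) 0
  have w1 := WR_peel (δ := δ) (w := w) s p (by omega : 0 < K)
  have w2 := WR_peel (δ := δ) (w := w) s (q δ w K s) (by omega : 0 < K)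
  have e3 := WQ (δ := δ) (w := w) hK s 1 le_rfl (by omega)
  have e4 := key 1 le_rfl (by omega)
  rw [show (1:ℕ) - 1 = 0 from rfl] at e3 e4
  simp only [zero_add] at w1 w2
  have hp0 : 0 ≤ p 0 := hp 0 (by omega)
  have hq0 : q δ w K s 0 = 0 := by rw [q, if_pos rfl]
  have hδ5 : δ * (B δ K 1 * w (s 0)) ≤ δ * WR δ w K s p 1 :=
    mul_le_mul_of_nonneg_left (by linarith) (le_of_lt hδ.1)
  rw [e3] at w2
  linarith

lemma impl_feas (hδ : δ ∈ Set.Ioo (0:ℝ) 1) (hK : 2 ≤ K) (s p : ℕ → ℝ)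
    (himp : ImplementableR δ π w C K s p) : FeasS δ π w C K s := by
  have h1 : δ ≠ 1 := ne_of_lt hδ.2
  obtain ⟨hb, h0, hm, hp, hPIC, hEIC⟩ := himp
  refine ⟨h0, hb, hm, ?_⟩
  intro t ht1 ht2
  have hA := (lemA hδ hK s p ⟨hb, h0, hm, hp, hPIC, hEIC⟩).1 t ht1 ht2
  have hB := hPIC t (by omega)
  rw [mul_div_right_comm, Bval h1] at hB
  have hQ := PiQ (δ := δ) (π := π) (w := w) (C := C) hK s t ht1 ht2
  have hPD := Phi_eq_D (δ := δ) (π := π) (w := w) (C := C) (K := K) s t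
  linarith

lemma sum_const_geom (c : ℝ) (t : ℕ) :
    ∑ τ ∈ Finset.Ico t K, δ ^ (τ - t) * c = B δ K t * c := by
  rw [Finset.sum_Ico_eq_sum_range]
  unfold B
  rw [Finset.sum_mul]
  exact Finset.sum_congr rfl fun i _ => by rw [show t + i - t = i by omega]

lemma zero_feas : FeasS δ π w C K (fun _ => 0) := by
  refine ⟨rfl, fun t _ => by simp, fun t _ => le_rfl, ?_⟩
  intro t ht1 ht2
  unfold D Phi
  rw [sum_const_geom]
  simp
  ring_nf
  simp

end Ineq
section Congr
variable {δ : ℝ} {π w C : ℝ → ℝ} {K : ℕ}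

lemma D_congr (s s' : ℕ → ℝ) (h : ∀ τ ≤ K, s τ = s' τ) {t : ℕ} (ht : t ≤ K) :
    D δ π w C K s t = D δ π w C K s' t := by
  unfold D Phi
  have hsum : ∑ τ ∈ Finset.Ico t K, δ ^ (τ - t) * (π (s τ) + w (s τ))
      = ∑ τ ∈ Finset.Ico t K, δ ^ (τ - t) * (π (s' τ) + w (s' τ)) := by
    refine Finset.sum_congr rfl fun τ hτ => ?_
    rw [h τ (le_of_lt (Finset.mem_Ico.1 hτ).2)]
  rw [hsum, h K le_rfl, h t ht, h (t - 1) (by omega)]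

lemma J_congr (s s' : ℕ → ℝ) (h : ∀ τ ≤ K, s τ = s' τ) :
    J δ π w C K s = J δ π w C K s' := by
  unfold J PiR
  congr 1
  · refine Finset.sum_congr rfl fun τ hτ => ?_
    have hτK : τ < K := (Finset.mem_Ico.1 hτ).2
    unfold q
    by_cases h0 : τ = 0
    · subst h0
      rw [if_pos rfl, if_pos rfl, h 0 (by omega)]
    · rw [if_neg h0, if_neg h0, h τ (by omega), h (τ - 1) (by omega)]
  · rw [h K le_rfl]

lemma FeasS_congr (s s' : ℕ → ℝ) (h : ∀ τ ≤ K, s τ = s' τ)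
    (hf : FeasS δ π w C K s) : FeasS δ π w C K s' := by
  obtain ⟨f0, fb, fm, fD⟩ := hf
  refine ⟨by rw [← h 0 (by omega)]; exact f0,
    fun t ht => by rw [← h t ht]; exact fb t ht,
    fun t ht => by rw [← h t (by omega), ← h (t + 1) (by omega)]; exact fm t ht,
    fun t ht1 ht2 => by rw [← D_congr s s' h (by omega : t ≤ K)]; exact fD t ht1 ht2⟩

end Congr

section Clamp
variable {δ : ℝ} {π w C : ℝ → ℝ} {K : ℕ}

noncomputable def cl (x : ℝ) : ℝ := max 0 (min x 1)

lemma cl_mem (x : ℝ) : cl x ∈ Set.Icc (0:ℝ) 1 :=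
  ⟨le_max_left _ _, max_le (by norm_num) (min_le_right _ _)⟩

lemma cl_eq {x : ℝ} (h : x ∈ Set.Icc (0:ℝ) 1) : cl x = x := by
  unfold cl
  rw [min_eq_left h.2, max_eq_right h.1]

lemma cl_cont : Continuous cl :=
  continuous_const.max (continuous_id.min continuous_const)

noncomputable def clf (f : ℝ → ℝ) : ℝ → ℝ := fun x => f (cl x)

lemma clf_cont {f : ℝ → ℝ} (hf : ContinuousOn f (Set.Icc 0 1)) : Continuous (clf f) :=
  hf.comp_continuous cl_cont cl_mem

lemma clf_eq {f : ℝ → ℝ} {x : ℝ} (h : x ∈ Set.Icc (0:ℝ) 1) : clf f x = f x := by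
  unfold clf
  rw [cl_eq h]

lemma D_cl (s : ℕ → ℝ) (hb : ∀ τ ≤ K, s τ ∈ Set.Icc (0:ℝ) 1) {t : ℕ} (ht : t ≤ K) :
    D δ (clf π) (clf w) (clf C) K s t = D δ π w C K s t := by
  unfold D Phi
  have hsum : ∑ τ ∈ Finset.Ico t K, δ ^ (τ - t) * (clf π (s τ) + clf w (s τ))
      = ∑ τ ∈ Finset.Ico t K, δ ^ (τ - t) * (π (s τ) + w (s τ)) := by
    refine Finset.sum_congr rfl fun τ hτ => ?_
    rw [clf_eq (hb τ (le_of_lt (Finset.mem_Ico.1 hτ).2)),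
      clf_eq (hb τ (le_of_lt (Finset.mem_Ico.1 hτ).2))]
  rw [hsum, clf_eq (hb K le_rfl), clf_eq (hb t ht), clf_eq (hb (t - 1) (by omega)),
    clf_eq (hb t ht)]

lemma J_cl (s : ℕ → ℝ) (hb : ∀ τ ≤ K, s τ ∈ Set.Icc (0:ℝ) 1) :
    J δ (clf π) (clf w) (clf C) K s = J δ π w C K s := by
  unfold J PiR
  congr 1
  · refine Finset.sum_congr rfl fun τ hτ => ?_
    have hτK : τ < K := (Finset.mem_Ico.1 hτ).2
    unfold q
    by_cases h0 : τ = 0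
    · subst h0
      rw [if_pos rfl, if_pos rfl, clf_eq (hb 0 (by omega))]
    · rw [if_neg h0, if_neg h0, clf_eq (hb τ (by omega)), clf_eq (hb (τ - 1) (by omega)),
        clf_eq (hb τ (by omega))]
  · rw [clf_eq (hb K le_rfl)]

lemma FeasS_cl (s : ℕ → ℝ) :
    FeasS δ (clf π) (clf w) (clf C) K s ↔ FeasS δ π w C K s := by
  constructor
  · rintro ⟨f0, fb, fm, fD⟩
    exact ⟨f0, fb, fm, fun t ht1 ht2 => by
      rw [← D_cl s fb (by omega : t ≤ K)]; exact fD t ht1 ht2⟩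
  · rintro ⟨f0, fb, fm, fD⟩
    exact ⟨f0, fb, fm, fun t ht1 ht2 => by
      rw [D_cl s fb (by omega : t ≤ K)]; exact fD t ht1 ht2⟩

end Clamp

section Exists
variable {δ : ℝ} {π w C : ℝ → ℝ} {K : ℕ}

noncomputable def extv (K : ℕ) (v : Fin (K + 1) → ℝ) : ℕ → ℝ :=
  fun t => v ⟨min t K, Nat.lt_succ_of_le (min_le_right _ _)⟩

lemma extv_le {v : Fin (K + 1) → ℝ} {t : ℕ} (ht : t ≤ K) :
    extv K v t = v ⟨t, by omega⟩ := by
  unfold extv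
  congr 1
  exact Fin.ext (min_eq_left ht)

lemma cont_eval (i : Fin (K + 1)) : Continuous (fun v : Fin (K + 1) → ℝ => v i) :=
  continuous_apply i

lemma cont_clf_ext {f : ℝ → ℝ} (hf : ContinuousOn f (Set.Icc 0 1)) (t : ℕ) :
    Continuous (fun v : Fin (K + 1) → ℝ => clf f (extv K v t)) :=
  (clf_cont hf).comp (continuous_apply _)

lemma cont_D (hπc : ContinuousOn π (Set.Icc 0 1)) (hwc : ContinuousOn w (Set.Icc 0 1))
    (hCc : ContinuousOn C (Set.Icc 0 1)) (t : ℕ) :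
    Continuous (fun v : Fin (K + 1) → ℝ => D δ (clf π) (clf w) (clf C) K (extv K v) t) := by
  unfold D Phi
  refine Continuous.sub (Continuous.sub (Continuous.sub ?_ ?_) ?_) (Continuous.sub ?_ ?_)
  · exact continuous_finset_sum _ fun τ _ => Continuous.mul continuous_const
      ((cont_clf_ext hπc τ).add (cont_clf_ext hwc τ))
  · exact continuous_const.mul (cont_clf_ext hwc _)
  · exact continuous_const.mul (cont_clf_ext hCc _)
  · exact continuous_const.mul (cont_clf_ext hπc _)
  · exact continuous_const.mul (cont_clf_ext hCc _)

lemma cont_J (hπc : ContinuousOn π (Set.Icc 0 1)) (hwc : ContinuousOn w (Set.Icc 0 1))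
    (hCc : ContinuousOn C (Set.Icc 0 1)) :
    Continuous (fun v : Fin (K + 1) → ℝ => J δ (clf π) (clf w) (clf C) K (extv K v)) := by
  unfold J PiR
  refine Continuous.sub ?_ (continuous_const.mul (cont_clf_ext hCc _))
  refine continuous_finset_sum _ fun τ _ => Continuous.mul continuous_const ?_
  refine Continuous.sub (cont_clf_ext hπc τ) ?_
  unfold q
  by_cases h0 : τ = 0
  · simp only [h0, if_pos rfl]
    exact continuous_const
  · simp only [if_neg h0]
    exact continuous_const.mul ((cont_clf_ext hwc _).sub (cont_clf_ext hwc _))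

lemma exists_max (hδ : δ ∈ Set.Ioo (0:ℝ) 1) (hK : 2 ≤ K)
    (hπc : ContinuousOn π (Set.Icc 0 1)) (hwc : ContinuousOn w (Set.Icc 0 1))
    (hCc : ContinuousOn C (Set.Icc 0 1)) :
    ∃ s0 : ℕ → ℝ, FeasS δ π w C K s0 ∧
      ∀ s, FeasS δ π w C K s → J δ π w C K s ≤ J δ π w C K s0 := by
  classical
  set T : Set (Fin (K + 1) → ℝ) :=
    {v | FeasS δ (clf π) (clf w) (clf C) K (extv K v)} with hT
  have hTsub : T ⊆ Set.pi Set.univ (fun _ : Fin (K + 1) => Set.Icc (0:ℝ) 1) := by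
    intro v hv i _
    have := hv.2.1 i.1 (by omega)
    rwa [extv_le (by omega : i.1 ≤ K), Fin.eta] at this
  have hTeq : T = {v : Fin (K + 1) → ℝ | extv K v 0 = 0}
      ∩ ((⋂ t : ℕ, {v : Fin (K + 1) → ℝ | t ≤ K → extv K v t ∈ Set.Icc (0:ℝ) 1})
      ∩ ((⋂ t : ℕ, {v : Fin (K + 1) → ℝ | t < K → extv K v t ≤ extv K v (t + 1)})
      ∩ (⋂ t : ℕ, {v : Fin (K + 1) → ℝ |
          1 ≤ t → t ≤ K - 1 → 0 ≤ D δ (clf π) (clf w) (clf C) K (extv K v) t}))) := by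
    ext v
    simp only [hT, Set.mem_setOf_eq, Set.mem_inter_iff, Set.mem_iInter, FeasS]
    try tauto
  have hclosed : IsClosed T := by
    rw [hTeq]
    refine IsClosed.inter ?_ (IsClosed.inter ?_ (IsClosed.inter ?_ ?_))
    · exact isClosed_eq ((continuous_apply _)) continuous_const
    · refine isClosed_iInter fun t => ?_
      by_cases ht : t ≤ K
      · have heq : {v : Fin (K + 1) → ℝ | t ≤ K → extv K v t ∈ Set.Icc (0:ℝ) 1}
            = (fun v : Fin (K + 1) → ℝ => extv K v t) ⁻¹' (Set.Icc (0:ℝ) 1) := by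
          ext v; simp [ht]
        rw [heq]
        exact IsClosed.preimage (continuous_apply _) isClosed_Icc
      · have heq : {v : Fin (K + 1) → ℝ | t ≤ K → extv K v t ∈ Set.Icc (0:ℝ) 1}
            = Set.univ := by
          ext v; simp [ht]
        rw [heq]; exact isClosed_univ
    · refine isClosed_iInter fun t => ?_
      by_cases ht : t < K
      · have heq : {v : Fin (K + 1) → ℝ | t < K → extv K v t ≤ extv K v (t + 1)}
            = {v : Fin (K + 1) → ℝ | extv K v t ≤ extv K v (t + 1)} := by
          ext v; simp [ht]
        rw [heq]
        exact isClosed_le (continuous_apply _) (continuous_apply _)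
      · have heq : {v : Fin (K + 1) → ℝ | t < K → extv K v t ≤ extv K v (t + 1)}
            = Set.univ := by
          ext v; simp [ht]
        rw [heq]; exact isClosed_univ
    · refine isClosed_iInter fun t => ?_
      by_cases ht : 1 ≤ t ∧ t ≤ K - 1
      · have heq : {v : Fin (K + 1) → ℝ |
            1 ≤ t → t ≤ K - 1 → 0 ≤ D δ (clf π) (clf w) (clf C) K (extv K v) t}
            = {v : Fin (K + 1) → ℝ | 0 ≤ D δ (clf π) (clf w) (clf C) K (extv K v) t} := by
          ext v; simp [ht.1, ht.2]
        rw [heq]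
        exact isClosed_le continuous_const (cont_D hπc hwc hCc t)
      · have heq : {v : Fin (K + 1) → ℝ |
            1 ≤ t → t ≤ K - 1 → 0 ≤ D δ (clf π) (clf w) (clf C) K (extv K v) t}
            = Set.univ := by
          ext v
          simp only [Set.mem_setOf_eq, Set.mem_univ, iff_true]
          intro h1 h2
          exact absurd ⟨h1, h2⟩ ht
        rw [heq]; exact isClosed_univ
  have hcomp : IsCompact T :=
    IsCompact.of_isClosed_subset (isCompact_univ_pi fun _ => isCompact_Icc) hclosed hTsub
  have hne : T.Nonempty := by
    refine ⟨fun _ => 0, ?_⟩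
    have hz := zero_feas (δ := δ) (π := clf π) (w := clf w) (C := clf C) (K := K)
    simp only [hT, Set.mem_setOf_eq]
    exact FeasS_congr (fun _ => 0) (extv K fun _ => 0) (fun τ hτ => rfl) hz
  obtain ⟨vh, hvT, hmax⟩ := hcomp.exists_isMaxOn hne (cont_J hπc hwc hCc).continuousOn
  have hvF : FeasS δ π w C K (extv K vh) := (FeasS_cl _).1 hvT
  refine ⟨extv K vh, hvF, ?_⟩
  intro s hs
  set vs : Fin (K + 1) → ℝ := fun i => s i.1 with hvs
  have hse : ∀ τ ≤ K, s τ = extv K vs τ := by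
    intro τ hτ
    rw [extv_le hτ]
  have hsF : FeasS δ π w C K (extv K vs) := FeasS_congr s _ hse hs
  have hvsT : vs ∈ T := (FeasS_cl _).2 hsF
  have := (isMaxOn_iff.1 hmax) vs hvsT
  calc J δ π w C K s = J δ π w C K (extv K vs) := J_congr s _ hse
    _ = J δ (clf π) (clf w) (clf C) K (extv K vs) := (J_cl _ hsF.2.1).symm
    _ ≤ J δ (clf π) (clf w) (clf C) K (extv K vh) := this
    _ = J δ π w C K (extv K vh) := J_cl _ hvF.2.1

end Exists
section Perturb
variable {δ : ℝ} {π w C : ℝ → ℝ} {K : ℕ}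

lemma D_updateK (s : ℕ → ℝ) (x : ℝ) {t : ℕ} (h2 : t ≤ K - 1) (hK : 2 ≤ K) :
    D δ π w C K (Function.update s K x) t
      = D δ π w C K s t + δ ^ (K - 1 - t) * (C (s K) - C x) := by
  unfold D Phi
  have hsum : ∑ τ ∈ Finset.Ico t K, δ ^ (τ - t) *
        (π (Function.update s K x τ) + w (Function.update s K x τ))
      = ∑ τ ∈ Finset.Ico t K, δ ^ (τ - t) * (π (s τ) + w (s τ)) := by
    refine Finset.sum_congr rfl fun τ hτ => ?_
    rw [Function.update_of_ne (by have := (Finset.mem_Ico.1 hτ).2; omega : τ ≠ K)]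
  rw [hsum, Function.update_of_ne (by omega : t ≠ K),
    Function.update_of_ne (by omega : t - 1 ≠ K), Function.update_self]
  ring

lemma J_updateK (hK : 2 ≤ K) (s : ℕ → ℝ) (x : ℝ) :
    J δ π w C K (Function.update s K x)
      = J δ π w C K s + δ ^ (K - 1) * (C (s K) - C x) := by
  unfold J PiR
  have hsum : ∑ τ ∈ Finset.Ico 0 K, δ ^ (τ - 0) *
        (π (Function.update s K x τ) - q δ w K (Function.update s K x) τ)
      = ∑ τ ∈ Finset.Ico 0 K, δ ^ (τ - 0) * (π (s τ) - q δ w K s τ) := by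
    refine Finset.sum_congr rfl fun τ hτ => ?_
    have hτK : τ < K := (Finset.mem_Ico.1 hτ).2
    unfold q
    by_cases h0 : τ = 0
    · subst h0
      rw [if_pos rfl, if_pos rfl, Function.update_of_ne (by omega : (0:ℕ) ≠ K)]
    · rw [if_neg h0, if_neg h0, Function.update_of_ne (by omega : τ ≠ K),
        Function.update_of_ne (by omega : τ - 1 ≠ K)]
  rw [hsum, Function.update_self, show K - 1 - 0 = K - 1 from rfl]
  ring

lemma max_sK (hδ : δ ∈ Set.Ioo (0:ℝ) 1) (hK : 2 ≤ K)
    (hCa : StrictAntiOn C (Set.Icc 0 1))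
    (sh : ℕ → ℝ) (hF : FeasS δ π w C K sh)
    (hmax : ∀ s, FeasS δ π w C K s → J δ π w C K s ≤ J δ π w C K sh) :
    sh K = 1 := by
  obtain ⟨f0, fb, fm, fD⟩ := hF
  by_contra hne
  have hKlt : sh K < 1 := lt_of_le_of_ne (fb K le_rfl).2 hne
  set u := Function.update sh K 1 with hu
  have huF : FeasS δ π w C K u := by
    refine ⟨?_, ?_, ?_, ?_⟩
    · rw [hu, Function.update_of_ne (by omega : (0:ℕ) ≠ K)]; exact f0
    · intro t ht
      by_cases htK : t = K
      · subst htK; rw [hu, Function.update_self]; exact ⟨by norm_num, le_rfl⟩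
      · rw [hu, Function.update_of_ne htK]; exact fb t ht
    · intro t ht
      by_cases htK : t + 1 = K
      · rw [hu, Function.update_of_ne (by omega : t ≠ K), htK, Function.update_self]
        exact (fb t (by omega)).2
      · rw [hu, Function.update_of_ne (by omega : t ≠ K), Function.update_of_ne htK]
        exact fm t ht
    · intro t ht1 ht2
      rw [hu, D_updateK sh 1 ht2 hK]
      have hCge : C 1 ≤ C (sh K) := le_of_lt (hCa (fb K le_rfl) ⟨by norm_num, le_rfl⟩ hKlt)
      have : (0:ℝ) ≤ δ ^ (K - 1 - t) * (C (sh K) - C 1) :=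
        mul_nonneg (pow_nonneg (le_of_lt hδ.1) _) (by linarith)
      have := fD t ht1 ht2
      linarith
  have hJ : J δ π w C K u ≤ J δ π w C K sh := hmax u huF
  rw [hu, J_updateK hK sh 1] at hJ
  have hCgt : C 1 < C (sh K) := hCa (fb K le_rfl) ⟨by norm_num, le_rfl⟩ hKlt
  have : (0:ℝ) < δ ^ (K - 1) * (C (sh K) - C 1) :=
    mul_pos (pow_pos hδ.1 _) (by linarith)
  linarith

lemma e_of_eq (s : ℕ → ℝ) {t : ℕ} (h : s (t + 1) = s t) :
    e δ π w C K s t = - (B δ K t * (w (s (t - 1)) - w (s t))) := by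
  unfold e
  rw [h]
  ring

lemma D_update_mono (hδ : δ ∈ Set.Ioo (0:ℝ) 1) (hK : 2 ≤ K)
    (hGm : StrictMonoOn (fun x => π x + w x) (Set.Icc 0 1))
    (hwa : StrictAntiOn w (Set.Icc 0 1))
    (s : ℕ → ℝ) (hb : ∀ t ≤ K, s t ∈ Set.Icc (0:ℝ) 1)
    {j : ℕ} (hj1 : 1 ≤ j) (hj2 : j ≤ K - 1) {x : ℝ}
    (hx : x ∈ Set.Icc (0:ℝ) 1) (hxge : s j ≤ x)
    {t : ℕ} (ht1 : 1 ≤ t) (ht2 : t ≤ K - 1) (htj : t ≠ j) :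
    D δ π w C K s t ≤ D δ π w C K (Function.update s j x) t := by
  have hδ0 : (0:ℝ) ≤ δ := le_of_lt hδ.1
  unfold D Phi
  have hsum : ∑ τ ∈ Finset.Ico t K, δ ^ (τ - t) * (π (s τ) + w (s τ))
      ≤ ∑ τ ∈ Finset.Ico t K, δ ^ (τ - t) *
        (π (Function.update s j x τ) + w (Function.update s j x τ)) := by
    refine Finset.sum_le_sum fun τ hτ => ?_
    by_cases hτj : τ = j
    · subst hτj
      rw [Function.update_self]
      have hGle : π (s τ) + w (s τ) ≤ π x + w x := mono_le hGm (hb τ (by omega)) hx hxge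
      exact mul_le_mul_of_nonneg_left hGle (pow_nonneg hδ0 _)
    · rw [Function.update_of_ne hτj]
  have hC1 : C (Function.update s j x t) = C (s t) := by
    rw [Function.update_of_ne htj]
  have hCK : C (Function.update s j x K) = C (s K) := by
    rw [Function.update_of_ne (by omega : K ≠ j)]
  have hπt : π (Function.update s j x t) = π (s t) := by
    rw [Function.update_of_ne htj]
  have hwterm : B δ K t * w (Function.update s j x (t - 1)) ≤ B δ K t * w (s (t - 1)) := by
    by_cases htj1 : t - 1 = j
    · rw [htj1, Function.update_self]
      have hwle : w x ≤ w (s j) := anti_le hwa (hb j (by omega)) hx hxge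
      have hB := B_nonneg (K := K) hδ0 t
      exact mul_le_mul_of_nonneg_left hwle hB
    · rw [Function.update_of_ne htj1]
  rw [hC1, hCK, hπt]
  linarith

lemma J_update_gt (hδ : δ ∈ Set.Ioo (0:ℝ) 1) (hK : 2 ≤ K)
    (hGm : StrictMonoOn (fun x => π x + w x) (Set.Icc 0 1))
    (s : ℕ → ℝ) (h0 : s 0 = 0) (hb : ∀ t ≤ K, s t ∈ Set.Icc (0:ℝ) 1)
    {j : ℕ} (hj1 : 1 ≤ j) (hj2 : j ≤ K - 1) {x : ℝ}
    (hx : x ∈ Set.Icc (0:ℝ) 1) (hxgt : s j < x) :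
    J δ π w C K s < J δ π w C K (Function.update s j x) := by
  have hδ0 : (0:ℝ) < δ := hδ.1
  have hu0 : Function.update s j x 0 = 0 := by
    rw [Function.update_of_ne (by omega : (0:ℕ) ≠ j)]; exact h0
  rw [J_eq hK s h0, J_eq hK _ hu0]
  have hPhi : Phi δ π w C K s 1 < Phi δ π w C K (Function.update s j x) 1 := by
    unfold Phi
    have hsum : ∑ τ ∈ Finset.Ico 1 K, δ ^ (τ - 1) * (π (s τ) + w (s τ))
        < ∑ τ ∈ Finset.Ico 1 K, δ ^ (τ - 1) *
          (π (Function.update s j x τ) + w (Function.update s j x τ)) := by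
      refine Finset.sum_lt_sum (fun τ hτ => ?_) ⟨j, Finset.mem_Ico.2 ⟨hj1, by omega⟩, ?_⟩
      · by_cases hτj : τ = j
        · subst hτj
          rw [Function.update_self]
          exact mul_le_mul_of_nonneg_left
            (mono_le hGm (hb τ (by omega : τ ≤ K)) hx (le_of_lt hxgt))
            (pow_nonneg (le_of_lt hδ0) _)
        · rw [Function.update_of_ne hτj]
      · rw [Function.update_self]
        have hGlt : π (s j) + w (s j) < π x + w x := hGm (hb j (by omega)) hx hxgt
        exact mul_lt_mul_of_pos_left hGlt (pow_pos hδ0 _)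
    have hw0 : w (Function.update s j x (1 - 1)) = w (s 0) := by
      rw [show (1:ℕ) - 1 = 0 from rfl, Function.update_of_ne (by omega : (0:ℕ) ≠ j)]
    have hCK : C (Function.update s j x K) = C (s K) := by
      rw [Function.update_of_ne (by omega : K ≠ j)]
    rw [hw0, hCK, show (1:ℕ) - 1 = 0 from rfl]
    linarith
  linarith [mul_lt_mul_of_pos_left hPhi hδ0]

lemma D_update_self (hδ : δ ∈ Set.Ioo (0:ℝ) 1) (hK : 2 ≤ K)
    (s : ℕ → ℝ) {j : ℕ} (hj1 : 1 ≤ j) (hj2 : j ≤ K - 1) (x : ℝ) :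
    D δ π w C K (Function.update s j x) j
      = (π x + w x) - B δ K j * π x + δ ^ (K - 1 - j) * C x
        + δ * (∑ τ ∈ Finset.Ico (j + 1) K, δ ^ (τ - (j + 1)) * (π (s τ) + w (s τ)))
        - B δ K j * w (s (j - 1)) - δ ^ (K - 1 - j) * C (s K) := by
  unfold D Phi
  rw [sum_peel (fun τ => π (Function.update s j x τ) + w (Function.update s j x τ))
    (by omega : j < K)]
  have hsum : ∑ τ ∈ Finset.Ico (j + 1) K, δ ^ (τ - (j + 1)) *
        (π (Function.update s j x τ) + w (Function.update s j x τ))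
      = ∑ τ ∈ Finset.Ico (j + 1) K, δ ^ (τ - (j + 1)) * (π (s τ) + w (s τ)) := by
    refine Finset.sum_congr rfl fun τ hτ => ?_
    rw [Function.update_of_ne (by have := (Finset.mem_Ico.1 hτ).1; omega : τ ≠ j)]
  rw [hsum, Function.update_self, Function.update_of_ne (by omega : j - 1 ≠ j),
    Function.update_of_ne (by omega : K ≠ j)]
  ring

lemma D_zero (hδ : δ ∈ Set.Ioo (0:ℝ) 1) (hK : 2 ≤ K)
    (hπc : ContinuousOn π (Set.Icc 0 1)) (hwc : ContinuousOn w (Set.Icc 0 1))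
    (hCc : ContinuousOn C (Set.Icc 0 1))
    (hGm : StrictMonoOn (fun x => π x + w x) (Set.Icc 0 1))
    (hwa : StrictAntiOn w (Set.Icc 0 1))
    (sh : ℕ → ℝ) (hF : FeasS δ π w C K sh)
    (hmax : ∀ s, FeasS δ π w C K s → J δ π w C K s ≤ J δ π w C K sh) :
    ∀ t, 1 ≤ t → t ≤ K - 1 → D δ π w C K sh t = 0 := by
  classical
  obtain ⟨f0, fb, fm, fD⟩ := hF
  by_contra hcon
  push_neg at hcon
  obtain ⟨t0, ht01, ht02, ht0ne⟩ := hcon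
  set F := (Finset.Icc 1 (K - 1)).filter (fun t => 0 < D δ π w C K sh t) with hFdef
  have hFne : F.Nonempty := by
    refine ⟨t0, Finset.mem_filter.2 ⟨Finset.mem_Icc.2 ⟨ht01, ht02⟩, ?_⟩⟩
    exact lt_of_le_of_ne (fD t0 ht01 ht02) (Ne.symm ht0ne)
  set j := F.max' hFne with hj
  have hjF : j ∈ F := Finset.max'_mem F hFne
  have hj1 : 1 ≤ j := (Finset.mem_Icc.1 (Finset.mem_filter.1 hjF).1).1
  have hj2 : j ≤ K - 1 := (Finset.mem_Icc.1 (Finset.mem_filter.1 hjF).1).2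
  have hDj : 0 < D δ π w C K sh j := (Finset.mem_filter.1 hjF).2
  have hDnext : j ≤ K - 2 → D δ π w C K sh (j + 1) = 0 := by
    intro hjle
    have hle : D δ π w C K sh (j + 1) ≤ 0 := by
      by_contra hh
      push_neg at hh
      have : j + 1 ∈ F := Finset.mem_filter.2 ⟨Finset.mem_Icc.2 ⟨by omega, by omega⟩, hh⟩
      have := Finset.le_max' F (j + 1) this
      omega
    exact le_antisymm hle (fD (j + 1) (by omega) (by omega))
  have hej : 0 < e δ π w C K sh j := by
    by_cases hjK : j = K - 1
    · have hd := D_K1 (δ := δ) (π := π) (w := w) (C := C) hK sh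
      rw [← hjK] at hd
      linarith
    · have hrec := D_rec (δ := δ) (π := π) (w := w) (C := C) hK sh hj1 (by omega : j ≤ K - 2)
      have hz := hDnext (by omega)
      rw [hz] at hrec
      simp only [mul_zero] at hrec
      linarith
  have hlt : sh j < sh (j + 1) := by
    rcases lt_or_eq_of_le (fm j (by omega)) with h | h
    · exact h
    · exfalso
      have := e_of_eq (δ := δ) (π := π) (w := w) (C := C) (K := K) sh h.symm
      have hw1 : sh (j - 1) ≤ sh j := by
        have := fm (j - 1) (by omega)
        rwa [show j - 1 + 1 = j by omega] at this
      have hwge : w (sh j) ≤ w (sh (j - 1)) :=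
        anti_le hwa (fb (j - 1) (by omega)) (fb j (by omega)) hw1
      have hB := B_nonneg (K := K) (le_of_lt hδ.1) j
      nlinarith
  -- continuity step: find x with sh j < x ≤ sh (j+1) and 0 ≤ D (update) j
  set g : ℝ → ℝ := fun x => D δ π w C K (Function.update sh j x) j with hg
  have hgval : g (sh j) = D δ π w C K sh j := by
    rw [hg]
    simp only [Function.update_eq_self]
  have hgc : ContinuousOn g (Set.Icc 0 1) := by
    have hform : ∀ x, g x = (π x + w x) - B δ K j * π x + δ ^ (K - 1 - j) * C x
        + δ * (∑ τ ∈ Finset.Ico (j + 1) K, δ ^ (τ - (j + 1)) * (π (sh τ) + w (sh τ)))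
        - B δ K j * w (sh (j - 1)) - δ ^ (K - 1 - j) * C (sh K) := fun x =>
      D_update_self hδ hK sh hj1 hj2 x
    have : g = fun x => (π x + w x) - B δ K j * π x + δ ^ (K - 1 - j) * C x
        + δ * (∑ τ ∈ Finset.Ico (j + 1) K, δ ^ (τ - (j + 1)) * (π (sh τ) + w (sh τ)))
        - B δ K j * w (sh (j - 1)) - δ ^ (K - 1 - j) * C (sh K) := funext hform
    rw [this]
    refine ContinuousOn.sub (ContinuousOn.sub (ContinuousOn.add (ContinuousOn.add
      (ContinuousOn.sub (hπc.add hwc) (continuousOn_const.mul hπc))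
      (continuousOn_const.mul hCc)) continuousOn_const) continuousOn_const)
      continuousOn_const
  have hmem : sh j ∈ Set.Icc (0:ℝ) 1 := fb j (by omega)
  have hmem1 : sh (j + 1) ∈ Set.Icc (0:ℝ) 1 := fb (j + 1) (by omega)
  have hsub : Set.Ioc (sh j) (sh (j + 1)) ⊆ Set.Icc (0:ℝ) 1 := by
    intro y hy
    exact ⟨le_trans hmem.1 (le_of_lt hy.1), le_trans hy.2 hmem1.2⟩
  have hcw : ContinuousWithinAt g (Set.Ioc (sh j) (sh (j + 1))) (sh j) :=
    (hgc (sh j) hmem).mono hsub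
  have hIoc : Set.Ioc (sh j) (sh (j + 1)) ∈ 𝓝[>] (sh j) := Ioc_mem_nhdsGT hlt
  have htd : Filter.Tendsto g (𝓝[>] (sh j)) (𝓝 (g (sh j))) :=
    hcw.mono_left (nhdsWithin_le_of_mem hIoc)
  have hev : ∀ᶠ x in 𝓝[>] (sh j), 0 < g x := by
    apply htd.eventually
    rw [hgval]
    exact eventually_gt_nhds hDj
  have hev2 : ∀ᶠ x in 𝓝[>] (sh j), x ∈ Set.Ioc (sh j) (sh (j + 1)) := hIoc
  obtain ⟨x, hxg, hxIoc⟩ := (hev.and hev2).exists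
  -- the perturbed sequence
  set u := Function.update sh j x with hu
  have hxmem : x ∈ Set.Icc (0:ℝ) 1 := hsub hxIoc
  have huF : FeasS δ π w C K u := by
    refine ⟨?_, ?_, ?_, ?_⟩
    · rw [hu, Function.update_of_ne (by omega : (0:ℕ) ≠ j)]; exact f0
    · intro t ht
      by_cases htj : t = j
      · subst htj; rw [hu, Function.update_self]; exact hxmem
      · rw [hu, Function.update_of_ne htj]; exact fb t ht
    · intro t ht
      by_cases htj : t = j
      · rw [hu, htj, Function.update_self, Function.update_of_ne (by omega : j + 1 ≠ j)]
        exact hxIoc.2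
      · by_cases htj1 : t + 1 = j
        · rw [hu, Function.update_of_ne htj, htj1, Function.update_self]
          have : sh t ≤ sh j := by
            have := fm t ht
            rw [htj1] at this
            exact this
          linarith [hxIoc.1]
        · rw [hu, Function.update_of_ne htj, Function.update_of_ne htj1]
          exact fm t ht
    · intro t ht1 ht2
      by_cases htj : t = j
      · rw [hu, htj]
        exact le_of_lt hxg
      · exact le_trans (fD t ht1 ht2)
          (D_update_mono hδ hK hGm hwa sh fb hj1 hj2 hxmem (le_of_lt hxIoc.1) ht1 ht2 htj)
  have := hmax u huF
  have hgt := J_update_gt (δ := δ) (π := π) (w := w) (C := C) (K := K) hδ hK hGm sh f0 fb hj1 hj2 hxmem hxIoc.1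
  rw [← hu] at hgt
  linarith

end Perturb
section Struct
variable {δ : ℝ} {π w C : ℝ → ℝ} {K : ℕ}

lemma e_of_D (hK : 2 ≤ K) (s : ℕ → ℝ)
    (hD : ∀ t, 1 ≤ t → t ≤ K - 1 → D δ π w C K s t = 0) :
    ∀ t, 1 ≤ t → t ≤ K - 1 → e δ π w C K s t = 0 := by
  intro t h1 h2
  by_cases h : t = K - 1
  · subst h
    rw [← D_K1 hK s]
    exact hD (K - 1) h1 h2
  · have hrec := D_rec (δ := δ) (π := π) (w := w) (C := C) hK s h1 (by omega : t ≤ K - 2)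
    rw [hD t h1 h2, hD (t + 1) (by omega) (by omega)] at hrec
    linarith

lemma rbe_D_zero (hK : 2 ≤ K) (s : ℕ → ℝ)
    (he : ∀ t, 1 ≤ t → t ≤ K - 1 → e δ π w C K s t = 0) :
    ∀ t, 1 ≤ t → t ≤ K - 1 → D δ π w C K s t = 0 := by
  suffices h : ∀ m t, t + m = K - 1 → 1 ≤ t → D δ π w C K s t = 0 by
    intro t h1 h2; exact h (K - 1 - t) t (by omega) h1
  intro m
  induction m with
  | zero =>
    intro t ht h1
    have : t = K - 1 := by omega
    subst this
    rw [D_K1 hK s]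
    exact he (K - 1) h1 le_rfl
  | succ m ih =>
    intro t ht h1
    rw [D_rec (δ := δ) (π := π) (w := w) (C := C) hK s h1 (by omega : t ≤ K - 2),
      he t h1 (by omega), ih (t + 1) (by omega) (by omega)]
    ring

lemma comb_strict (hπm : StrictMonoOn π (Set.Icc 0 1)) (hCa : StrictAntiOn C (Set.Icc 0 1))
    {cp cc : ℝ} (hcp : 0 ≤ cp) (hcc : 0 < cc) :
    StrictMonoOn (fun x => cp * π x - cc * C x) (Set.Icc (0:ℝ) 1) := by
  intro x hx y hy hxy
  have h1 : π x < π y := hπm hx hy hxy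
  have h2 : C y < C x := hCa hx hy hxy
  have h3 : cp * π x ≤ cp * π y := mul_le_mul_of_nonneg_left (le_of_lt h1) hcp
  have h4 : cc * C y < cc * C x := mul_lt_mul_of_pos_left h2 hcc
  simp only
  linarith

lemma opt_strict (hδ : δ ∈ Set.Ioo (0:ℝ) 1) (hK : 2 ≤ K)
    (hπm : StrictMonoOn π (Set.Icc 0 1)) (hwa : StrictAntiOn w (Set.Icc 0 1))
    (hCa : StrictAntiOn C (Set.Icc 0 1))
    (sh : ℕ → ℝ) (f0 : sh 0 = 0) (fb : ∀ t ≤ K, sh t ∈ Set.Icc (0:ℝ) 1)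
    (fm : ∀ t < K, sh t ≤ sh (t + 1))
    (he : ∀ t, 1 ≤ t → t ≤ K - 1 → e δ π w C K sh t = 0) (hK1 : sh K = 1) :
    ∀ t < K, sh t < sh (t + 1) := by
  have hz : (0:ℝ) ∈ Set.Icc (0:ℝ) 1 := ⟨le_rfl, by norm_num⟩
  have hbase : sh 0 < sh 1 := by
    by_contra hnc
    push_neg at hnc
    have h10 : sh 1 = 0 := by
      have := (fb 1 (by omega)).1
      rw [f0] at hnc
      linarith
    have main : ∀ t, t ≤ K → sh t = 0 := by
      intro t
      induction t using Nat.strong_induction_on with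
      | _ t ih =>
        intro ht
        match t with
        | 0 => exact f0
        | 1 => exact h10
        | (r + 2) =>
          have hr1 : sh (r + 1) = 0 := ih (r + 1) (by omega) (by omega)
          have hr0 : sh r = 0 := ih r (by omega) (by omega)
          have heq := he (r + 1) (by omega) (by omega)
          unfold e at heq
          rw [show r + 1 - 1 = r from rfl, hr1, hr0] at heq
          have hmem : sh (r + 1 + 1) ∈ Set.Icc (0:ℝ) 1 := fb (r + 1 + 1) (by omega)
          have hπge : π 0 ≤ π (sh (r + 1 + 1)) := mono_le hπm hz hmem hmem.1
          have hCge : C (sh (r + 1 + 1)) ≤ C 0 := anti_le hCa hz hmem hmem.1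
          have hB : 0 ≤ B δ K (r + 1 + 1) := B_nonneg (le_of_lt hδ.1) _
          have hpow : (0:ℝ) < δ ^ (K - 1 - (r + 1)) := pow_pos hδ.1 _
          have h5 : 0 ≤ δ * B δ K (r + 1 + 1) * (π (sh (r + 1 + 1)) - π 0) :=
            mul_nonneg (mul_nonneg (le_of_lt hδ.1) hB) (by linarith)
          have h6 : δ ^ (K - 1 - (r + 1)) * (C 0 - C (sh (r + 1 + 1))) = 0 := by
            nlinarith
          have h7 : C 0 - C (sh (r + 1 + 1)) = 0 := by
            rcases mul_eq_zero.1 h6 with h | h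
            · exact absurd h (ne_of_gt hpow)
            · exact h
          have h8 : C (sh (r + 1 + 1)) = C 0 := by linarith
          exact hCa.injOn hmem hz h8
    have := main K le_rfl
    rw [hK1] at this
    norm_num at this
  have hstep : ∀ t, 1 ≤ t → t ≤ K - 1 → sh (t - 1) < sh t → sh t < sh (t + 1) := by
    intro t h1 h2 hlt
    rcases lt_or_eq_of_le (fm t (by omega)) with h | h
    · exact h
    · exfalso
      have heoe := e_of_eq (δ := δ) (π := π) (w := w) (C := C) (K := K) sh h.symm
      rw [he t h1 h2] at heoe
      have hB : 0 < B δ K t := B_pos hδ.1 (by omega)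
      have hwd : w (sh (t - 1)) - w (sh t) = 0 := by
        have : B δ K t * (w (sh (t - 1)) - w (sh t)) = 0 := by linarith
        rcases mul_eq_zero.1 this with hh | hh
        · exact absurd hh (ne_of_gt hB)
        · exact hh
      have hweq : w (sh (t - 1)) = w (sh t) := by linarith
      have := hwa.injOn (fb (t - 1) (by omega)) (fb t (by omega)) hweq
      rw [this] at hlt
      exact lt_irrefl _ hlt
  intro t
  induction t with
  | zero => exact fun _ => hbase
  | succ r ih =>
    intro hrK
    have hprev : sh r < sh (r + 1) := ih (by omega)
    have := hstep (r + 1) (by omega) (by omega) (by rwa [show r + 1 - 1 = r from rfl])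
    exact this

lemma q_congr (s s' : ℕ → ℝ) (h : ∀ τ ≤ K, s τ = s' τ) {t : ℕ} (ht : t < K) :
    q δ w K s t = q δ w K s' t := by
  unfold q
  by_cases h0 : t = 0
  · rw [if_pos h0, if_pos h0]
  · rw [if_neg h0, if_neg h0, h t (by omega), h (t - 1) (by omega)]

lemma PiR_congr (s s' p : ℕ → ℝ) (h : ∀ τ ≤ K, s τ = s' τ) (t : ℕ) :
    PiR δ π C K s p t = PiR δ π C K s' p t := by
  unfold PiR
  rw [h K le_rfl]
  congr 1
  refine Finset.sum_congr rfl fun τ hτ => ?_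
  rw [h τ (le_of_lt (Finset.mem_Ico.1 hτ).2)]

lemma WR_congr (s s' p : ℕ → ℝ) (h : ∀ τ ≤ K, s τ = s' τ) (t : ℕ) :
    WR δ w K s p t = WR δ w K s' p t := by
  unfold WR
  refine Finset.sum_congr rfl fun τ hτ => ?_
  rw [h τ (le_of_lt (Finset.mem_Ico.1 hτ).2)]

lemma seq_unique (hδ : δ ∈ Set.Ioo (0:ℝ) 1) (hK : 2 ≤ K)
    (hπm : StrictMonoOn π (Set.Icc 0 1)) (hCa : StrictAntiOn C (Set.Icc 0 1))
    (s s' : ℕ → ℝ) (hb : ∀ t ≤ K, s t ∈ Set.Icc (0:ℝ) 1)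
    (hb' : ∀ t ≤ K, s' t ∈ Set.Icc (0:ℝ) 1)
    (he : ∀ t, 1 ≤ t → t ≤ K - 1 → e δ π w C K s t = 0)
    (he' : ∀ t, 1 ≤ t → t ≤ K - 1 → e δ π w C K s' t = 0)
    (h0 : s 0 = s' 0) (h1 : s 1 = s' 1) (hKK : s K = s' K) :
    ∀ t ≤ K, s t = s' t := by
  intro t
  induction t using Nat.strong_induction_on with
  | _ t ih =>
    intro ht
    match t with
    | 0 => exact h0
    | 1 => exact h1
    | (r + 2) =>
      by_cases hrK : r + 2 = K
      · rw [hrK]; exact hKK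
      · have hr2 : r + 2 ≤ K - 1 := by omega
        have ha := he (r + 1) (by omega) (by omega)
        have hb2 := he' (r + 1) (by omega) (by omega)
        unfold e at ha hb2
        rw [show r + 1 - 1 = r from rfl] at ha hb2
        have e1 : s (r + 1) = s' (r + 1) := ih (r + 1) (by omega) (by omega)
        have e0 : s r = s' r := ih r (by omega) (by omega)
        rw [e1, e0] at ha
        have hcomb : δ * B δ K (r + 1 + 1) * π (s (r + 1 + 1))
            - δ ^ (K - 1 - (r + 1)) * C (s (r + 1 + 1))
            = δ * B δ K (r + 1 + 1) * π (s' (r + 1 + 1))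
            - δ ^ (K - 1 - (r + 1)) * C (s' (r + 1 + 1)) := by linarith
        have hsm := comb_strict hπm hCa
          (mul_nonneg (le_of_lt hδ.1) (B_nonneg (K := K) (le_of_lt hδ.1) (r + 1 + 1)))
          (pow_pos hδ.1 (K - 1 - (r + 1)))
        exact hsm.injOn (hb (r + 2) ht) (hb' (r + 2) ht) hcomb

lemma J_decomp (hK : 2 ≤ K) (s : ℕ → ℝ) (h0 : s 0 = 0) :
    J δ π w C K s = π 0 + δ * (D δ π w C K s 1
      + (B δ K 1 * π (s 1) - δ ^ (K - 1 - 1) * C (s 1))) := by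
  rw [J_eq hK s h0, Phi_eq_D]

lemma pay_unique (hδ : δ ∈ Set.Ioo (0:ℝ) 1) (hK : 2 ≤ K)
    (sh : ℕ → ℝ) (hD0 : ∀ t, 1 ≤ t → t ≤ K - 1 → D δ π w C K sh t = 0)
    (p' : ℕ → ℝ) (himp : ImplementableR δ π w C K sh p')
    (hP0 : PiR δ π C K sh p' 0 = PiR δ π C K sh (q δ w K sh) 0) :
    ∀ t < K, p' t = q δ w K sh t := by
  obtain ⟨hb, h0, hm, hp, hPIC, hEIC⟩ := himp
  have h1 : δ ≠ 1 := ne_of_lt hδ.2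
  have hWeq : ∀ t, 1 ≤ t → t ≤ K - 1 →
      WR δ w K sh p' t = WR δ w K sh (q δ w K sh) t := by
    intro t ht1 ht2
    have hge : B δ K t * w (sh (t - 1)) ≤ WR δ w K sh p' t := by
      have := hEIC (t - 1) (by omega)
      rwa [show t - 1 + 1 = t by omega, mul_div_right_comm,
        show K - (t - 1) - 1 = K - t by omega, Bval h1] at this
    have hle : PiR δ π C K sh (q δ w K sh) t ≤ PiR δ π C K sh p' t := by
      have hbnd := hPIC t (by omega)
      rw [mul_div_right_comm, Bval h1] at hbnd
      have hQ := PiQ (δ := δ) (π := π) (w := w) (C := C) hK sh t ht1 ht2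
      have hPD := Phi_eq_D (δ := δ) (π := π) (w := w) (C := C) (K := K) sh t
      have hz := hD0 t ht1 ht2
      linarith
    have e1 := PiWR (δ := δ) (π := π) (w := w) (C := C) (K := K) sh p' t
    have e2 := PiWR (δ := δ) (π := π) (w := w) (C := C) (K := K) sh (q δ w K sh) t
    have e3 := WQ (δ := δ) (w := w) hK sh t ht1 ht2
    linarith
  have hWK : WR δ w K sh p' K = WR δ w K sh (q δ w K sh) K := by
    unfold WR; simp
  have hnext : ∀ t, 1 ≤ t → t ≤ K - 1 →
      WR δ w K sh p' (t + 1) = WR δ w K sh (q δ w K sh) (t + 1) := by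
    intro t ht1 ht2
    by_cases h : t + 1 ≤ K - 1
    · exact hWeq (t + 1) (by omega) h
    · rw [show t + 1 = K by omega]
      exact hWK
  have hmain : ∀ t, 1 ≤ t → t ≤ K - 1 → p' t = q δ w K sh t := by
    intro t ht1 ht2
    have w1 := WR_peel (δ := δ) (w := w) sh p' (by omega : t < K)
    have w2 := WR_peel (δ := δ) (w := w) sh (q δ w K sh) (by omega : t < K)
    have hWt := hWeq t ht1 ht2
    have hmul : δ * WR δ w K sh p' (t + 1) = δ * WR δ w K sh (q δ w K sh) (t + 1) := by
      rw [hnext t ht1 ht2]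
    linarith
  intro t htK
  by_cases ht0 : t = 0
  · subst ht0
    have e1 := PiWR (δ := δ) (π := π) (w := w) (C := C) (K := K) sh p' 0
    have e2 := PiWR (δ := δ) (π := π) (w := w) (C := C) (K := K) sh (q δ w K sh) 0
    have w1 := WR_peel (δ := δ) (w := w) sh p' (by omega : 0 < K)
    have w2 := WR_peel (δ := δ) (w := w) sh (q δ w K sh) (by omega : 0 < K)
    have hn := hnext 1 le_rfl (by omega)
    simp only [zero_add] at w1 w2
    rw [show (1:ℕ) + 1 = 2 from rfl] at hn
    have hn1 : δ * WR δ w K sh p' 1 = δ * WR δ w K sh (q δ w K sh) 1 := by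
      rw [hWeq 1 le_rfl (by omega)]
    have hq0 : q δ w K sh 0 = 0 := by rw [q, if_pos rfl]
    linarith
  · exact hmain t (by omega) (by omega)

end Struct
end Retire

/-- Existence, uniqueness and structure of the optimal contract with retirement. -/
theorem retirement_optimal_structure
    (δ : ℝ) (hδ : δ ∈ Set.Ioo (0 : ℝ) 1) (K : ℕ) (hK : 2 ≤ K) (π w C : ℝ → ℝ)
    (hπc : ContinuousOn π (Set.Icc 0 1)) (hwc : ContinuousOn w (Set.Icc 0 1))
    (hπm : StrictMonoOn π (Set.Icc 0 1)) (hwa : StrictAntiOn w (Set.Icc 0 1))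
    (hGm : StrictMonoOn (fun x => π x + w x) (Set.Icc 0 1))
    (hCc : ContinuousOn C (Set.Icc 0 1)) (hCa : StrictAntiOn C (Set.Icc 0 1))
    (hC1 : C 1 = 0) :
    ∃ s p : ℕ → ℝ, OptimalR δ π w C K s p ∧
      (∀ t < K, s t < s (t + 1)) ∧ s 0 = 0 ∧ s K = 1 ∧
      (∀ s' : ℕ → ℝ, (∀ t ≤ K, s' t ∈ Set.Icc (0 : ℝ) 1) → s' 0 = 0 →
        (∀ t < K, s' t ≤ s' (t + 1)) → RBE δ π w C K s' → s' 1 ≤ s 1) ∧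
      p 0 = 0 ∧
      (∀ t : ℕ, 1 ≤ t → t ≤ K - 1 →
        p t = (1 - δ ^ (K - t)) * (w (s (t - 1)) - w (s t)) / (1 - δ)) ∧
      (∀ s' p' : ℕ → ℝ, OptimalR δ π w C K s' p' →
        (∀ t ≤ K, s' t = s t) ∧ (∀ t < K, p' t = p t)) := by
  classical
  have h1 : δ ≠ 1 := ne_of_lt hδ.2
  obtain ⟨sh, hF, hmax⟩ := Retire.exists_max hδ hK hπc hwc hCc
  have f0 : sh 0 = 0 := hF.1
  have fb : ∀ t ≤ K, sh t ∈ Set.Icc (0:ℝ) 1 := hF.2.1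
  have fm : ∀ t < K, sh t ≤ sh (t + 1) := hF.2.2.1
  have hK1 : sh K = 1 := Retire.max_sK hδ hK hCa sh hF hmax
  have hD0 : ∀ t, 1 ≤ t → t ≤ K - 1 → Retire.D δ π w C K sh t = 0 :=
    Retire.D_zero hδ hK hπc hwc hCc hGm hwa sh hF hmax
  have he0 := Retire.e_of_D hK sh hD0
  have hsm : ∀ t < K, sh t < sh (t + 1) :=
    Retire.opt_strict hδ hK hπm hwa hCa sh f0 fb fm he0 hK1
  have himpl : ImplementableR δ π w C K sh (Retire.q δ w K sh) :=
    Retire.canon_impl hδ hK hπm hwa hCa sh hF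
  have hBnn : (0:ℝ) ≤ Retire.B δ K 1 := Retire.B_nonneg (le_of_lt hδ.1) 1
  have hpow : (0:ℝ) < δ ^ (K - 1 - 1) := pow_pos hδ.1 _
  refine ⟨sh, Retire.q δ w K sh, ⟨himpl, ?_⟩, hsm, f0, hK1, ?_, ?_, ?_, ?_⟩
  · -- optimality
    intro s' p' h'
    have hf' := Retire.impl_feas hδ hK s' p' h'
    have hA := (Retire.lemA hδ hK s' p' h').2
    have hm' := hmax s' hf'
    simp only [Retire.J] at hm'
    linarith
  · -- maximality of s 1 among RBE sequences
    intro s' hb' h0' hm' hrbe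
    have he' := (Retire.rbe_iff hδ hK s').1 hrbe
    have hD' := Retire.rbe_D_zero hK s' he'
    have hf' : Retire.FeasS δ π w C K s' :=
      ⟨h0', hb', hm', fun t a b => le_of_eq (hD' t a b).symm⟩
    have hJ := hmax s' hf'
    rw [Retire.J_decomp hK s' h0', Retire.J_decomp hK sh f0,
      hD' 1 le_rfl (by omega), hD0 1 le_rfl (by omega)] at hJ
    have h2 : δ * ((0:ℝ) + (Retire.B δ K 1 * π (s' 1) - δ ^ (K - 1 - 1) * C (s' 1)))
        ≤ δ * (0 + (Retire.B δ K 1 * π (sh 1) - δ ^ (K - 1 - 1) * C (sh 1))) := by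
      linarith
    have h3 := le_of_mul_le_mul_left h2 hδ.1
    by_contra hcon
    push_neg at hcon
    have hcs := Retire.comb_strict hπm hCa hBnn hpow (fb 1 (by omega)) (hb' 1 (by omega)) hcon
    have hcs' : Retire.B δ K 1 * π (sh 1) - δ ^ (K - 1 - 1) * C (sh 1)
        < Retire.B δ K 1 * π (s' 1) - δ ^ (K - 1 - 1) * C (s' 1) := hcs
    linarith
  · -- p 0 = 0
    simp [Retire.q]
  · -- payment formula
    intro t ht1 ht2
    rw [Retire.q, if_neg (by omega : ¬ t = 0), mul_div_right_comm, Retire.Bval h1]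
  · -- uniqueness
    intro s' p' hopt'
    have himpl' := hopt'.1
    have hf' := Retire.impl_feas hδ hK s' p' himpl'
    have h0' : s' 0 = 0 := hf'.1
    have hb' : ∀ t ≤ K, s' t ∈ Set.Icc (0:ℝ) 1 := hf'.2.1
    have hle1 := (Retire.lemA hδ hK s' p' himpl').2
    have hle2 := hmax s' hf'
    simp only [Retire.J] at hle2
    have hge : PiR δ π C K sh (Retire.q δ w K sh) 0 ≤ PiR δ π C K s' p' 0 :=
      hopt'.2 sh (Retire.q δ w K sh) himpl
    have hXeq : PiR δ π C K s' (Retire.q δ w K s') 0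
        = PiR δ π C K sh (Retire.q δ w K sh) 0 := le_antisymm hle2 (by linarith)
    have hYeq : PiR δ π C K s' p' 0 = PiR δ π C K s' (Retire.q δ w K s') 0 :=
      le_antisymm hle1 (by linarith)
    have hmax' : ∀ s, Retire.FeasS δ π w C K s →
        Retire.J δ π w C K s ≤ Retire.J δ π w C K s' := by
      intro s hs
      have := hmax s hs
      simp only [Retire.J] at this ⊢
      linarith
    have hK1' := Retire.max_sK hδ hK hCa s' hf' hmax'
    have hD0' := Retire.D_zero hδ hK hπc hwc hCc hGm hwa s' hf' hmax'
    have he0' := Retire.e_of_D hK s' hD0'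
    -- s' 1 = sh 1
    have hJeq : Retire.J δ π w C K s' = Retire.J δ π w C K sh := by
      simp only [Retire.J]
      exact hXeq
    rw [Retire.J_decomp hK s' h0', Retire.J_decomp hK sh f0,
      hD0' 1 le_rfl (by omega), hD0 1 le_rfl (by omega)] at hJeq
    have h2 : δ * ((0:ℝ) + (Retire.B δ K 1 * π (s' 1) - δ ^ (K - 1 - 1) * C (s' 1)))
        = δ * (0 + (Retire.B δ K 1 * π (sh 1) - δ ^ (K - 1 - 1) * C (sh 1))) := by
      linarith
    have h3 := mul_left_cancel₀ (ne_of_gt hδ.1) h2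
    have h11 : s' 1 = sh 1 := by
      refine (Retire.comb_strict hπm hCa hBnn hpow).injOn
        (hb' 1 (by omega)) (fb 1 (by omega)) ?_
      show Retire.B δ K 1 * π (s' 1) - δ ^ (K - 1 - 1) * C (s' 1)
        = Retire.B δ K 1 * π (sh 1) - δ ^ (K - 1 - 1) * C (sh 1)
      linarith
    have hseq : ∀ t ≤ K, s' t = sh t :=
      Retire.seq_unique hδ hK hπm hCa s' sh hb' fb he0' he0
        (by rw [h0', f0]) h11 (by rw [hK1', hK1])
    refine ⟨hseq, ?_⟩
    -- payments
    obtain ⟨ib, i0, im, ip, iP, iE⟩ := himpl'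
    have himpl'' : ImplementableR δ π w C K sh p' := by
      refine ⟨fb, f0, fm, ip, ?_, ?_⟩
      · intro t ht
        have := iP t ht
        rwa [hseq t (by omega), Retire.PiR_congr s' sh p' hseq t] at this
      · intro t ht
        have := iE t ht
        rwa [hseq t (by omega), Retire.WR_congr s' sh p' hseq (t + 1)] at this
    have hP0 : PiR δ π C K sh p' 0 = PiR δ π C K sh (Retire.q δ w K sh) 0 := by
      have hc := Retire.PiR_congr (δ := δ) (π := π) (C := C) s' sh p' hseq 0
      linarith
    exact Retire.pay_unique hδ hK sh hD0 p' himpl'' hP0
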